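/- Monotonicity of the reduced cost in the transported mass: with d_1 ≤ … ≤ d_n, l such that d_i ≤ 2 iff i ≤ l, weights b_i > 0, c > 0, define for α ∈ [0, min{c, Σ_{i=1}^l b_i}] the index I_α = max{ I : Σ_{i=1}^I b_i ≤ α } and F̃(α) = c + Σ_{i=1}^n b_i − 2α + Σ_{i=1}^{I_α} b_i d_i + (α − Σ_{i=1}^{I_α} b_i) d_{I_α+1}. Then F̃ is monotonically decreasing on [0, min{c, Σ_{i=1}^l b_i}]. -/

import Mathlib

open Classical in
/-- `I_α`: the largest `I ≤ n` with `Σ_{i<I} b_i ≤ α` (0-based indexing). -/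
noncomputable def Ialpha (bb : ℕ → ℝ) (n : ℕ) (α : ℝ) : ℕ :=
  Nat.findGreatest (fun I => ∑ i ∈ Finset.range I, bb i ≤ α) n

/-- The reduced cost `F̃(α)` of greedily transporting mass `α`. -/
noncomputable def Ftilde (c : ℝ) (bb dd : ℕ → ℝ) (n : ℕ) (α : ℝ) : ℝ :=
  c + ∑ i ∈ Finset.range n, bb i - 2 * α +
    ∑ i ∈ Finset.range (Ialpha bb n α), bb i * dd i +
    (α - ∑ i ∈ Finset.range (Ialpha bb n α), bb i) * dd (Ialpha bb n α)

private lemma min_sub_min (a b x : ℝ) (hab : a ≤ b) :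
    min x b - min x a = min (max x a) b - a := by
  rcases le_total x a with h | h
  · rw [min_eq_left (h.trans hab), min_eq_left h, max_eq_right h, min_eq_left hab]
    ring
  · rw [min_eq_right h, max_eq_left h]

private lemma S_lt {n : ℕ} (bb : ℕ → ℝ) (hb : ∀ i : Fin n, 0 < bb i) {i j : ℕ}
    (hij : i < j) (hjn : j ≤ n) :
    ∑ k ∈ Finset.range i, bb k < ∑ k ∈ Finset.range j, bb k := by
  refine Finset.sum_lt_sum_of_subset (Finset.range_subset_range.2 hij.le)
    (i := i) (by simp [hij]) (by simp) (hb ⟨i, lt_of_lt_of_le hij hjn⟩) ?_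
  intro k hk _
  exact (hb ⟨k, lt_of_lt_of_le (Finset.mem_range.1 hk) hjn⟩).le

private lemma S_le {n : ℕ} (bb : ℕ → ℝ) (hb : ∀ i : Fin n, 0 < bb i) {i j : ℕ}
    (hij : i ≤ j) (hjn : j ≤ n) :
    ∑ k ∈ Finset.range i, bb k ≤ ∑ k ∈ Finset.range j, bb k := by
  rcases eq_or_lt_of_le hij with rfl | h
  · exact le_refl _
  · exact (S_lt bb hb h hjn).le

private lemma Ialpha_formula {n l : ℕ} (bb dd : ℕ → ℝ) (hb : ∀ i : Fin n, 0 < bb i)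
    (hln : l ≤ n) {α : ℝ} (h0 : 0 ≤ α) (hα : α ≤ ∑ i ∈ Finset.range l, bb i) :
    ∑ i ∈ Finset.range (Ialpha bb n α), bb i * dd i +
      (α - ∑ i ∈ Finset.range (Ialpha bb n α), bb i) * dd (Ialpha bb n α)
    = ∑ i ∈ Finset.range l,
        dd i * (min α (∑ j ∈ Finset.range (i+1), bb j)
          - min α (∑ j ∈ Finset.range i, bb j)) := by
  set I := Ialpha bb n α with hIdef
  have hIn : I ≤ n := Nat.findGreatest_le n
  have hSI : (∑ j ∈ Finset.range I, bb j) ≤ α := by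
    have := Nat.findGreatest_spec (P := fun I => ∑ i ∈ Finset.range I, bb i ≤ α)
      (Nat.zero_le n) (by simpa using h0)
    exact this
  have hIl : I ≤ l := by
    by_contra h
    push_neg at h
    have := S_lt bb hb h hIn
    linarith
  rcases eq_or_lt_of_le hIl with heq | hlt
  · -- I = l, hence α = S l
    have hαl : α = ∑ j ∈ Finset.range l, bb j := le_antisymm hα (heq ▸ hSI)
    rw [heq]
    have : ∀ i ∈ Finset.range l,
        dd i * (min α (∑ j ∈ Finset.range (i+1), bb j)
          - min α (∑ j ∈ Finset.range i, bb j)) = bb i * dd i := by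
      intro i hi
      have hi' := Finset.mem_range.1 hi
      have h1 : (∑ j ∈ Finset.range (i+1), bb j) ≤ α := by
        rw [hαl]; exact S_le bb hb hi' hln
      have h2 : (∑ j ∈ Finset.range i, bb j) ≤ α := by
        rw [hαl]; exact S_le bb hb hi'.le hln
      rw [min_eq_right h1, min_eq_right h2, Finset.sum_range_succ]
      ring
    rw [Finset.sum_congr rfl this, hαl]
    ring
  · -- I < l
    have hIn' : I < n := lt_of_lt_of_le hlt hln
    have hlt2 : α < ∑ j ∈ Finset.range (I+1), bb j := by
      have := Nat.findGreatest_is_greatest (P := fun I => ∑ i ∈ Finset.range I, bb i ≤ α)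
        (n := n) (by omega : I < I + 1) (by omega)
      exact lt_of_not_ge this
    have hsplit : ∑ i ∈ Finset.range l,
        dd i * (min α (∑ j ∈ Finset.range (i+1), bb j)
          - min α (∑ j ∈ Finset.range i, bb j))
        = (∑ i ∈ Finset.range (I+1),
            dd i * (min α (∑ j ∈ Finset.range (i+1), bb j)
              - min α (∑ j ∈ Finset.range i, bb j)))
          + ∑ i ∈ Finset.Ico (I+1) l,
            dd i * (min α (∑ j ∈ Finset.range (i+1), bb j)
              - min α (∑ j ∈ Finset.range i, bb j)) :=
      (Finset.sum_range_add_sum_Ico _ (by omega : I + 1 ≤ l)).symm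
    have htail : ∑ i ∈ Finset.Ico (I+1) l,
        dd i * (min α (∑ j ∈ Finset.range (i+1), bb j)
          - min α (∑ j ∈ Finset.range i, bb j)) = 0 := by
      apply Finset.sum_eq_zero
      intro i hi
      obtain ⟨hi1, hi2⟩ := Finset.mem_Ico.1 hi
      have h1 : α ≤ ∑ j ∈ Finset.range i, bb j :=
        le_trans hlt2.le (S_le bb hb hi1 (le_trans hi2.le hln))
      have h2 : α ≤ ∑ j ∈ Finset.range (i+1), bb j :=
        le_trans hlt2.le (S_le bb hb (by omega) (by omega))
      rw [min_eq_left h1, min_eq_left h2]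
      ring
    have hhead : ∀ i ∈ Finset.range I,
        dd i * (min α (∑ j ∈ Finset.range (i+1), bb j)
          - min α (∑ j ∈ Finset.range i, bb j)) = bb i * dd i := by
      intro i hi
      have hi' := Finset.mem_range.1 hi
      have h1 : (∑ j ∈ Finset.range (i+1), bb j) ≤ α :=
        le_trans (S_le bb hb hi' hIn) hSI
      have h2 : (∑ j ∈ Finset.range i, bb j) ≤ α :=
        le_trans (S_le bb hb hi'.le hIn) hSI
      rw [min_eq_right h1, min_eq_right h2, Finset.sum_range_succ]
      ring
    rw [hsplit, htail, Finset.sum_range_succ, Finset.sum_congr rfl hhead,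
      min_eq_left hlt2.le, min_eq_right hSI]
    ring

/-- `F̃` is monotonically decreasing on `[0, min{c, Σ_{i<l} b_i}]`. -/
theorem Ftilde_antitone {n : ℕ} (c : ℝ) (hc : 0 < c) (dd bb : ℕ → ℝ)
    (hmono : ∀ i j : Fin n, (i : ℕ) ≤ j → dd i ≤ dd j)
    (hb : ∀ i : Fin n, 0 < bb i)
    (l : ℕ) (hln : l ≤ n)
    (hl : ∀ i : Fin n, dd i ≤ 2 ↔ (i : ℕ) < l) :
    ∀ α₁ α₂ : ℝ, 0 ≤ α₁ → α₁ ≤ α₂ → α₂ ≤ min c (∑ i ∈ Finset.range l, bb i) →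
      Ftilde c bb dd n α₂ ≤ Ftilde c bb dd n α₁ := by
  intro α₁ α₂ h01 h12 h2
  have h02 : 0 ≤ α₂ := h01.trans h12
  have hα2l : α₂ ≤ ∑ i ∈ Finset.range l, bb i := le_trans h2 (min_le_right _ _)
  have hα1l : α₁ ≤ ∑ i ∈ Finset.range l, bb i := h12.trans hα2l
  have e1 := Ialpha_formula (n := n) bb dd hb hln h01 hα1l
  have e2 := Ialpha_formula (n := n) bb dd hb hln h02 hα2l
  -- key estimate
  have key : (∑ i ∈ Finset.range l,
        dd i * (min α₂ (∑ j ∈ Finset.range (i+1), bb j)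
          - min α₂ (∑ j ∈ Finset.range i, bb j)))
      - (∑ i ∈ Finset.range l,
        dd i * (min α₁ (∑ j ∈ Finset.range (i+1), bb j)
          - min α₁ (∑ j ∈ Finset.range i, bb j)))
      ≤ 2 * (α₂ - α₁) := by
    rw [← Finset.sum_sub_distrib]
    have step : ∀ i ∈ Finset.range l,
        dd i * (min α₂ (∑ j ∈ Finset.range (i+1), bb j)
          - min α₂ (∑ j ∈ Finset.range i, bb j))
        - dd i * (min α₁ (∑ j ∈ Finset.range (i+1), bb j)
          - min α₁ (∑ j ∈ Finset.range i, bb j))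
        ≤ 2 * ((min α₂ (∑ j ∈ Finset.range (i+1), bb j)
          - min α₂ (∑ j ∈ Finset.range i, bb j))
          - (min α₁ (∑ j ∈ Finset.range (i+1), bb j)
          - min α₁ (∑ j ∈ Finset.range i, bb j))) := by
      intro i hi
      have hi' := Finset.mem_range.1 hi
      have hin : i < n := lt_of_lt_of_le hi' hln
      have hdd : dd i ≤ 2 := (hl ⟨i, hin⟩).2 hi'
      have hab : (∑ j ∈ Finset.range i, bb j) ≤ ∑ j ∈ Finset.range (i+1), bb j :=
        S_le bb hb (Nat.le_succ i) (by omega)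
      have hΔ : 0 ≤ (min α₂ (∑ j ∈ Finset.range (i+1), bb j)
          - min α₂ (∑ j ∈ Finset.range i, bb j))
          - (min α₁ (∑ j ∈ Finset.range (i+1), bb j)
          - min α₁ (∑ j ∈ Finset.range i, bb j)) := by
        rw [min_sub_min _ _ _ hab, min_sub_min _ _ _ hab]
        have : min (max α₁ (∑ j ∈ Finset.range i, bb j)) (∑ j ∈ Finset.range (i+1), bb j)
            ≤ min (max α₂ (∑ j ∈ Finset.range i, bb j)) (∑ j ∈ Finset.range (i+1), bb j) :=
          min_le_min (max_le_max h12 le_rfl) le_rfl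
        linarith
      nlinarith [hΔ, hdd]
    calc ∑ i ∈ Finset.range l, _ ≤ ∑ i ∈ Finset.range l,
          2 * ((min α₂ (∑ j ∈ Finset.range (i+1), bb j)
            - min α₂ (∑ j ∈ Finset.range i, bb j))
            - (min α₁ (∑ j ∈ Finset.range (i+1), bb j)
            - min α₁ (∑ j ∈ Finset.range i, bb j))) := Finset.sum_le_sum step
      _ = 2 * (α₂ - α₁) := by
          rw [← Finset.mul_sum]
          congr 1
          rw [Finset.sum_sub_distrib,
            Finset.sum_range_sub (fun i => min α₂ (∑ j ∈ Finset.range i, bb j)),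
            Finset.sum_range_sub (fun i => min α₁ (∑ j ∈ Finset.range i, bb j))]
          simp only [Finset.range_zero, Finset.sum_empty]
          rw [min_eq_left hα2l, min_eq_left hα1l, min_eq_right h02, min_eq_right h01]
          ring
  unfold Ftilde
  linarith [e1, e2, key]
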